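/- (Lubotzky) Let p be a prime and let G be a finitely generated group which is virtually residually p (i.e. G has a finite-index subgroup which is residually p). Then Aut(G) is virtually residually p. -/

import Mathlib

namespace Lub

open Subgroup
open scoped commutatorElement

variable {G : Type*} [Group G]

/-- The subgroup generated by `p`-th powers and commutators of `H`. -/
def phiStep (p : ℕ) (H : Subgroup G) : Subgroup G :=
  Subgroup.closure ((fun x => x ^ p) '' (H : Set G)) ⊔ ⁅H, H⁆

variable {p : ℕ} {H K : Subgroup G}

lemma phiStep_le : phiStep p H ≤ H := by
  apply sup_le
  · rw [Subgroup.closure_le]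
    rintro x ⟨y, hy, rfl⟩
    exact pow_mem hy p
  · rw [Subgroup.commutator_le]
    intro x hx y hy
    rw [commutatorElement_def]
    exact mul_mem (mul_mem (mul_mem hx hy) (inv_mem hx)) (inv_mem hy)

lemma pow_mem_phiStep {x : G} (hx : x ∈ H) : x ^ p ∈ phiStep p H :=
  Subgroup.mem_sup_left (Subgroup.subset_closure ⟨x, hx, rfl⟩)

lemma commutator_mem_phiStep {x y : G} (hx : x ∈ H) (hy : y ∈ H) : ⁅x, y⁆ ∈ phiStep p H :=
  Subgroup.mem_sup_right (Subgroup.commutator_mem_commutator hx hy)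

lemma phiStep_le_of {M : Subgroup G} (hpow : ∀ x ∈ H, x ^ p ∈ M)
    (hcomm : ∀ x ∈ H, ∀ y ∈ H, ⁅x, y⁆ ∈ M) : phiStep p H ≤ M := by
  apply sup_le
  · rw [Subgroup.closure_le]
    rintro x ⟨y, hy, rfl⟩
    exact hpow y hy
  · rw [Subgroup.commutator_le]
    exact hcomm

lemma phiStep_mono (h : H ≤ K) : phiStep p H ≤ phiStep p K :=
  phiStep_le_of (fun x hx => pow_mem_phiStep (h hx))
    (fun x hx y hy => commutator_mem_phiStep (h hx) (h hy))

lemma map_phiStep {G' : Type*} [Group G'] (f : G →* G') (H : Subgroup G) :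
    (phiStep p H).map f = phiStep p (H.map f) := by
  unfold phiStep
  rw [Subgroup.map_sup, Subgroup.map_commutator, MonoidHom.map_closure]
  congr 1
  congr 1
  ext y
  constructor
  · rintro ⟨_, ⟨x, hx, rfl⟩, rfl⟩
    exact ⟨f x, ⟨x, hx, rfl⟩, (map_pow f x p).symm⟩
  · rintro ⟨_, ⟨x, hx, rfl⟩, rfl⟩
    exact ⟨x ^ p, ⟨x, hx, rfl⟩, map_pow f x p⟩

instance phiStep_top_normal : (phiStep p (⊤ : Subgroup G)).Normal := by
  constructor
  intro n hn g
  have h1 : ⁅n⁻¹, g⁆ ∈ phiStep p (⊤ : Subgroup G) :=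
    commutator_mem_phiStep (Subgroup.mem_top _) (Subgroup.mem_top _)
  have : g * n * g⁻¹ = n * ⁅n⁻¹, g⁆ := by
    simp only [commutatorElement_def]
    group
  rw [this]
  exact mul_mem hn h1
lemma map_subtype_top' (H : Subgroup G) : (⊤ : Subgroup ↥H).map H.subtype = H := by
  rw [← MonoidHom.range_eq_map, Subgroup.range_subtype]

/-- In a finite `p`-group, a maximal subgroup contains all `p`-th powers and commutators. -/
lemma phiStep_le_coatom {P : Type*} [Group P] [Finite P] (hp : p.Prime)
    (hP : IsPGroup p P) {M : Subgroup P} (hM : IsCoatom M) :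
    phiStep p (⊤ : Subgroup P) ≤ M := by
  haveI := Fact.mk hp
  haveI : Group.IsNilpotent P := hP.isNilpotent
  haveI hMnormal : M.Normal :=
    Subgroup.NormalizerCondition.normal_of_coatom M normalizerCondition_of_isNilpotent hM
  have hsur : Function.Surjective (QuotientGroup.mk' M) := QuotientGroup.mk'_surjective M
  have hkey : ∀ S : Subgroup (P ⧸ M), S = ⊥ ∨ S = ⊤ := by
    intro S
    have hle : M ≤ S.comap (QuotientGroup.mk' M) := by
      intro m hm
      have h1 : QuotientGroup.mk' M m = 1 := (QuotientGroup.eq_one_iff m).2 hm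
      rw [Subgroup.mem_comap, h1]
      exact one_mem S
    have h2 := Subgroup.map_comap_eq_self_of_surjective hsur S
    rcases eq_or_lt_of_le hle with h | h
    · left
      rw [← h2, ← h, QuotientGroup.map_mk'_self]
    · right
      rw [← h2, hM.2 _ h, ← MonoidHom.range_eq_map, MonoidHom.range_eq_top.2 hsur]
  have hnt : ∃ t : P ⧸ M, t ≠ 1 := by
    obtain ⟨x, -, hx⟩ := SetLike.exists_of_lt (lt_top_iff_ne_top.2 hM.1)
    exact ⟨QuotientGroup.mk x, fun h => hx ((QuotientGroup.eq_one_iff x).1 h)⟩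
  have hTp : IsPGroup p (P ⧸ M) := hP.to_quotient M
  have hzp : ∀ s : P ⧸ M, s ≠ 1 → Subgroup.zpowers s = ⊤ := by
    intro s hs
    refine (hkey _).resolve_left ?_
    rw [Subgroup.zpowers_eq_bot]
    exact hs
  have hpow : ∀ s : P ⧸ M, s ^ p = 1 := by
    intro s
    by_cases hs : s = 1
    · simp [hs]
    by_contra hsp
    have hmem : s ∈ Subgroup.zpowers (s ^ p) := (hzp (s ^ p) hsp).symm ▸ Subgroup.mem_top s
    obtain ⟨m, hm⟩ := Subgroup.mem_zpowers_iff.1 hmem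
    obtain ⟨k, hk⟩ := hTp s
    obtain ⟨j, hj, hjo⟩ := (Nat.dvd_prime_pow hp).1 (orderOf_dvd_of_pow_eq_one hk)
    have hj0 : j ≠ 0 := by
      intro h0
      rw [h0, pow_zero] at hjo
      exact hs (orderOf_eq_one_iff.1 hjo)
    have hdvd : (orderOf s : ℤ) ∣ (p : ℤ) * m - 1 := by
      rw [orderOf_dvd_iff_zpow_eq_one]
      have : (s ^ p) ^ m = s := hm
      rw [← zpow_natCast, ← zpow_mul] at this
      rw [zpow_sub, this, zpow_one, mul_inv_cancel]
    have hpdvd : (p : ℤ) ∣ (p : ℤ) * m - 1 := by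
      refine dvd_trans ?_ hdvd
      rw [hjo]
      exact_mod_cast dvd_pow_self (p : ℤ) hj0
    have : (p : ℤ) ∣ 1 := (dvd_sub_right (Dvd.intro m rfl)).1 hpdvd
    have h2 := Int.le_of_dvd one_pos this
    have h3 := hp.two_le
    omega
  have hcomm : ∀ a b : P ⧸ M, a * b = b * a := by
    intro a b
    by_cases ha : a = 1
    · simp [ha]
    have hmem : b ∈ Subgroup.zpowers a := (hzp a ha).symm ▸ Subgroup.mem_top b
    obtain ⟨m, hm⟩ := Subgroup.mem_zpowers_iff.1 hmem
    subst hm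
    exact ((Commute.refl a).zpow_right m).eq
  apply phiStep_le_of
  · intro x _
    have h1 : ((x ^ p : P) : P ⧸ M) = 1 := by
      rw [QuotientGroup.mk_pow]
      exact hpow _
    exact (QuotientGroup.eq_one_iff _).1 h1
  · intro x _ y _
    have h1 : ((⁅x, y⁆ : P) : P ⧸ M) = 1 := by
      have : ((⁅x, y⁆ : P) : P ⧸ M) = ⁅(x : P ⧸ M), (y : P ⧸ M)⁆ :=
        map_commutatorElement (QuotientGroup.mk' M) x y
      rw [this, commutatorElement_eq_one_iff_mul_comm]
      exact hcomm _ _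
    exact (QuotientGroup.eq_one_iff _).1 h1

lemma frattini_arg {P : Type*} [Group P] [Finite P] (hp : p.Prime) (hP : IsPGroup p P)
    {K : Subgroup P} (h : K ⊔ phiStep p (⊤ : Subgroup P) = ⊤) : K = ⊤ := by
  haveI : Finite (Subgroup P) :=
    Finite.of_injective (SetLike.coe : Subgroup P → Set P) SetLike.coe_injective
  by_contra hK
  obtain ⟨M, hM, hKM⟩ := (eq_top_or_exists_le_coatom K).resolve_left hK
  have h2 : phiStep p (⊤ : Subgroup P) ≤ M := phiStep_le_coatom hp hP hM
  exact hM.1 (top_le_iff.1 (h ▸ sup_le hKM h2))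

lemma phiStep_lt {P : Type*} [Group P] [Finite P] (hp : p.Prime) (hP : IsPGroup p P)
    {H : Subgroup P} (hH : H ≠ ⊥) : phiStep p H < H := by
  refine lt_of_le_of_ne phiStep_le ?_
  intro heq
  have h1 : (phiStep p (⊤ : Subgroup ↥H)).map H.subtype = phiStep p H := by
    rw [map_phiStep, map_subtype_top']
  have h2 : phiStep p (⊤ : Subgroup ↥H) = ⊤ := by
    apply Subgroup.map_injective H.subtype_injective
    rw [h1, heq, map_subtype_top']
  have h3 : (⊥ : Subgroup ↥H) = ⊤ :=
    frattini_arg hp (hP.to_subgroup H) (K := (⊥ : Subgroup ↥H)) (by rw [bot_sup_eq, h2])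
  apply hH
  rw [eq_bot_iff]
  intro x hx
  have : (⟨x, hx⟩ : ↥H) ∈ (⊥ : Subgroup ↥H) := h3 ▸ Subgroup.mem_top _
  simpa [Subgroup.mem_bot] using congrArg (Subgroup.subtype H) this

/-- The iterated phiStep series of a finite `p`-group reaches the trivial subgroup. -/
lemma exists_phi_chain_bot {F : Type*} [Group F] [Finite F] (hp : p.Prime)
    (hF : IsPGroup p F) : ∃ k, (phiStep p)^[k] (⊤ : Subgroup F) = ⊥ := by
  by_contra hcon
  push_neg at hcon
  set R : ℕ → Subgroup F := fun k => (phiStep p)^[k] (⊤ : Subgroup F) with hR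
  have hstep : ∀ k, Nat.card ↥(R (k + 1)) < Nat.card ↥(R k) := by
    intro k
    have hlt : phiStep p (R k) < R k := phiStep_lt hp hF (hcon k)
    have h1 : R (k + 1) = phiStep p (R k) := Function.iterate_succ_apply' _ _ _
    rw [h1]
    refine lt_of_le_of_ne (Subgroup.card_le_of_le hlt.le) fun hcardeq =>
      hlt.ne (Subgroup.eq_of_le_of_card_ge hlt.le (le_of_eq hcardeq.symm))
  have hdesc : ∀ k, Nat.card ↥(R k) + k ≤ Nat.card ↥(R 0) := by
    intro k
    induction k with
    | zero => simp
    | succ n ih =>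
      have := hstep n
      omega
  have hpos : 0 < Nat.card ↥(R (Nat.card ↥(R 0))) := Nat.card_pos
  have := hdesc (Nat.card ↥(R 0))
  omega

lemma isPGroup_of_chain {Q : Type*} [Group Q] {k : ℕ} {C : ℕ → Subgroup Q}
    (hpow : ∀ i, ∀ x ∈ C i, x ^ p ∈ C (i + 1)) (hbot : C k = ⊥) :
    IsPGroup p ↥(C 0) := by
  have key : ∀ j i, ∀ x ∈ C i, x ^ (p ^ j) ∈ C (i + j) := by
    intro j
    induction j with
    | zero => intro i x hx; simpa using hx
    | succ n ih =>
      intro i x hx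
      have h1 : x ^ (p ^ (n + 1)) = (x ^ (p ^ n)) ^ p := by
        rw [← pow_mul, pow_succ]
      rw [h1, show i + (n + 1) = (i + n) + 1 by ring]
      exact hpow _ _ (ih i x hx)
  intro g
  refine ⟨k, ?_⟩
  have h1 : (g : Q) ^ (p ^ k) ∈ C k := by simpa using key k 0 g g.2
  rw [hbot, Subgroup.mem_bot] at h1
  ext
  simpa using h1

/-- The key stability lemma: an automorphism of finite order `q ≠ p` which moves every
element by an element of the Frattini-type subgroup of a `p`-subgroup `M₀` is trivial. -/
lemma aut_trivial {Q : Type*} [Group Q] [Finite Q] {q : ℕ} (hp : p.Prime) (hq : q.Prime)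
    (hqp : q ≠ p) {M₀ M₁ : Subgroup Q} (hM₀ : IsPGroup p ↥M₀) (h10 : M₁ ≤ phiStep p M₀)
    {β : MulAut Q} (hβ : ∀ x : Q, x⁻¹ * β x ∈ M₁) (hord : β ^ q = 1) : β = 1 := by
  haveI := Fact.mk hp
  haveI := Fact.mk hq
  by_cases hβ1 : β = 1
  · exact hβ1
  have hM1le : M₁ ≤ M₀ := h10.trans phiStep_le
  have hM₁ : IsPGroup p ↥M₁ := hM₀.to_le hM1le
  -- the fixed-point subgroup of β
  let Fix : Subgroup Q :=
  { carrier := {x | β x = x}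
    one_mem' := map_one β
    mul_mem' := fun {a b} ha hb => by
      simp only [Set.mem_setOf_eq] at *
      rw [map_mul, ha, hb]
    inv_mem' := fun {a} ha => by
      simp only [Set.mem_setOf_eq] at *
      rw [map_inv, ha] }
  -- step 1 : M₀ is pointwise fixed.
  have hM₀fix : ∀ x ∈ M₀, β x = x := by
    -- enumerate M₀ and consider tuples
    set n := Nat.card ↥M₀ with hn
    let m : Fin n ≃ ↥M₀ := (Finite.equivFin ↥M₀).symm
    let X := {f : Fin n → Q // ∀ i, ((m i : Q))⁻¹ * f i ∈ M₁}
    -- the element moves within cosets of M₁, for each power of β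
    have hzp : ∀ γ ∈ Subgroup.zpowers β, ∀ x : Q, x⁻¹ * γ x ∈ M₁ := by
      have hsub : Subgroup.zpowers β ≤
        { carrier := {γ : MulAut Q | ∀ x : Q, x⁻¹ * γ x ∈ M₁}
          one_mem' := by intro x; simpa using one_mem M₁
          mul_mem' := fun {a b} ha hb => by
            intro x
            have h1 := hb x
            have h2 := ha (b x)
            have : x⁻¹ * (a * b) x = (x⁻¹ * b x) * ((b x)⁻¹ * a (b x)) := by
              rw [MulAut.mul_apply]
              group
            rw [this]
            exact mul_mem h1 h2
          inv_mem' := fun {a} ha => by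
            intro x
            have h1 := ha (a⁻¹ x)
            have h2 : (a (a⁻¹ x)) = x := by
              rw [← MulAut.mul_apply, mul_inv_cancel, MulAut.one_apply]
            rw [h2] at h1
            have : x⁻¹ * a⁻¹ x = ((a⁻¹ x)⁻¹ * x)⁻¹ := by group
            rw [this]
            exact inv_mem h1 } := by
        rw [Subgroup.zpowers_le]
        exact hβ
      intro γ hγ x
      exact hsub hγ x
    -- action of the cyclic group generated by β on X
    letI : SMul ↥(Subgroup.zpowers β) X :=
      ⟨fun γ f => ⟨fun i => γ.1 (f.1 i), by
        intro i
        have h1 := f.2 i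
        have h2 := hzp γ.1 γ.2 (f.1 i)
        have : ((m i : Q))⁻¹ * γ.1 (f.1 i)
            = (((m i : Q))⁻¹ * f.1 i) * ((f.1 i)⁻¹ * γ.1 (f.1 i)) := by group
        rw [this]
        exact mul_mem h1 h2⟩⟩
    letI : MulAction ↥(Subgroup.zpowers β) X :=
    { one_smul := fun f => by
        apply Subtype.ext
        funext i
        show ((1 : MulAut Q) : MulAut Q) (f.1 i) = f.1 i
        simp
      mul_smul := fun γ δ f => by
        apply Subtype.ext
        funext i
        show (γ.1 * δ.1) (f.1 i) = γ.1 (δ.1 (f.1 i))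
        simp }
    -- cardinality of X is a power of p
    have hXcard : ∃ a, Nat.card X = p ^ a := by
      have hE : X ≃ (Fin n → ↥M₁) :=
      { toFun := fun f i => ⟨((m i : Q))⁻¹ * f.1 i, f.2 i⟩
        invFun := fun g => ⟨fun i => (m i : Q) * (g i : Q), by
          intro i
          simpa using (g i).2⟩
        left_inv := fun f => by
          apply Subtype.ext
          funext i
          simp
        right_inv := fun g => by
          funext i
          apply Subtype.ext
          simp }
      obtain ⟨a, ha⟩ := IsPGroup.iff_card.1 hM₁
      refine ⟨a * n, ?_⟩
      rw [Nat.card_congr hE, Nat.card_fun, ha, Nat.card_eq_fintype_card, Fintype.card_fin,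
        ← pow_mul]
    -- the acting group is a q-group
    have horder : orderOf β = q := orderOf_eq_prime hord hβ1
    have hQgrp : IsPGroup q ↥(Subgroup.zpowers β) := by
      apply IsPGroup.of_card (n := 1)
      rw [Nat.card_zpowers, horder, pow_one]
    -- apply the fixed point counting
    have hmod := hQgrp.card_modEq_card_fixedPoints X
    obtain ⟨a, ha⟩ := hXcard
    have hfix_ne : Nat.card (MulAction.fixedPoints ↥(Subgroup.zpowers β) X) ≠ 0 := by
      intro h0
      rw [ha, h0] at hmod
      have : q ∣ p ^ a := (Nat.modEq_zero_iff_dvd).1 hmod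
      exact hqp ((Nat.prime_dvd_prime_iff_eq hq hp).1 (hq.dvd_of_dvd_pow this))
    have : Nonempty (MulAction.fixedPoints ↥(Subgroup.zpowers β) X) :=
      (Nat.card_ne_zero.1 hfix_ne).1
    obtain ⟨f, hf⟩ := this
    have hfβ : ∀ i, β (f.1 i) = f.1 i := by
      intro i
      have := hf ⟨β, Subgroup.mem_zpowers β⟩
      have h2 := congrArg (fun g => g.1 i) this
      exact h2
    -- transfer to a statement inside ↥M₀ via the Frattini argument
    have htrans : phiStep p M₀ = (phiStep p (⊤ : Subgroup ↥M₀)).map M₀.subtype := by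
      rw [map_phiStep, map_subtype_top']
    have hKtop : Fix.subgroupOf M₀ ⊔ phiStep p (⊤ : Subgroup ↥M₀) = ⊤ := by
      rw [eq_top_iff]
      intro y _
      set i := m.symm y with hi
      have hmi : m i = y := m.apply_symm_apply y
      have hfi : ((y : Q))⁻¹ * f.1 i ∈ M₁ := by
        have := f.2 i
        rwa [hmi] at this
      have hfiM₀ : f.1 i ∈ M₀ := by
        have h1 : (y : Q) * (((y : Q))⁻¹ * f.1 i) = f.1 i := by group
        rw [← h1]
        exact mul_mem y.2 (hM1le hfi)
      have ha' : (⟨f.1 i, hfiM₀⟩ : ↥M₀) ∈ Fix.subgroupOf M₀ := by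
        rw [Subgroup.mem_subgroupOf]
        exact hfβ i
      have hc' : (⟨f.1 i, hfiM₀⟩ : ↥M₀)⁻¹ * y ∈ phiStep p (⊤ : Subgroup ↥M₀) := by
        have hcQ : (f.1 i)⁻¹ * (y : Q) ∈ phiStep p M₀ := by
          have : (f.1 i)⁻¹ * (y : Q) = (((y : Q))⁻¹ * f.1 i)⁻¹ := by group
          rw [this]
          exact inv_mem (h10 hfi)
        rw [htrans] at hcQ
        obtain ⟨z, hz, hz2⟩ := hcQ
        have : z = (⟨f.1 i, hfiM₀⟩ : ↥M₀)⁻¹ * y := by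
          apply Subtype.ext
          simpa using hz2
        rwa [← this]
      have hy : y = (⟨f.1 i, hfiM₀⟩ : ↥M₀) * ((⟨f.1 i, hfiM₀⟩ : ↥M₀)⁻¹ * y) := by group
      rw [hy]
      exact mul_mem (Subgroup.mem_sup_left ha') (Subgroup.mem_sup_right hc')
    have hKeq : Fix.subgroupOf M₀ = ⊤ := frattini_arg hp hM₀ hKtop
    intro x hx
    have : (⟨x, hx⟩ : ↥M₀) ∈ Fix.subgroupOf M₀ := hKeq ▸ Subgroup.mem_top _
    rwa [Subgroup.mem_subgroupOf] at this
  -- step 2 : conclude that β is trivial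
  apply MulEquiv.ext
  intro x
  set d := x⁻¹ * β x with hd
  have hdM₁ : d ∈ M₁ := hβ x
  have hdM₀ : d ∈ M₀ := hM1le hdM₁
  have hdfix : β d = d := hM₀fix d hdM₀
  have hβx : β x = x * d := by rw [hd]; group
  have hpows : ∀ j : ℕ, (β ^ j) x = x * d ^ j := by
    intro j
    induction j with
    | zero => simp
    | succ nn ih =>
      rw [pow_succ', MulAut.mul_apply, ih, map_mul, hβx, map_pow, hdfix, pow_succ']
      group
  have hq1 : x = x * d ^ q := by
    have := hpows q
    rwa [hord, MulAut.one_apply] at this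
  have hdq : d ^ q = 1 := by
    apply mul_left_cancel (a := x)
    rw [mul_one, ← hq1]
  obtain ⟨kk, hkk⟩ := hM₀ ⟨d, hdM₀⟩
  have hdpk : d ^ (p ^ kk) = 1 := by
    have := congrArg (Subgroup.subtype M₀) hkk
    simpa using this
  have hd1 : d = 1 := by
    have h1 : orderOf d ∣ q := orderOf_dvd_of_pow_eq_one hdq
    have h2 : orderOf d ∣ p ^ kk := orderOf_dvd_of_pow_eq_one hdpk
    rcases (Nat.Prime.eq_one_or_self_of_dvd hq _ h1) with h | h
    · exact orderOf_eq_one_iff.1 h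
    · exfalso
      rw [h] at h2
      exact hqp ((Nat.prime_dvd_prime_iff_eq hq hp).1 (hq.dvd_of_dvd_pow h2))
  show β x = x
  rw [hβx, hd1, mul_one]

/-- A finitely generated commutative group of exponent dividing `p` is finite. -/
lemma finite_of_comm_exponent {T : Type*} [Group T] (hp1 : 1 < p)
    (hc : ∀ a b : T, a * b = b * a) (hpow : ∀ a : T, a ^ p = 1)
    (S : Finset T) (hS : Subgroup.closure (S : Set T) = ⊤) : Finite T := by
  haveI : NeZero p := ⟨by omega⟩
  haveI : Fact (1 < p) := ⟨hp1⟩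
  classical
  letI : CommGroup T := { (inferInstance : Group T) with mul_comm := hc }
  have hmod : ∀ (a : T) (x : ℕ), a ^ (x % p) = a ^ x := by
    intro a x
    conv_rhs => rw [← Nat.div_add_mod x p]
    rw [pow_add, pow_mul, hpow, one_pow, one_mul]
  let φ : (↥S → Multiplicative (ZMod p)) →* T :=
  { toFun := fun f => ∏ s : S, (s : T) ^ (Multiplicative.toAdd (f s)).val
    map_one' := by simp
    map_mul' := by
      intro f g
      rw [← Finset.prod_mul_distrib]
      apply Finset.prod_congr rfl
      intro s _
      have h1 : (Multiplicative.toAdd ((f * g) s)).val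
          = ((Multiplicative.toAdd (f s)).val + (Multiplicative.toAdd (g s)).val) % p := by
        simp [ZMod.val_add]
      rw [h1, hmod, pow_add] }
  have hsur : Function.Surjective φ := by
    have hrange : (⊤ : Subgroup T) ≤ φ.range := by
      rw [← hS, Subgroup.closure_le]
      intro s hs
      refine ⟨fun t => if t = ⟨s, hs⟩ then Multiplicative.ofAdd 1 else 1, ?_⟩
      have h2 : φ (fun t => if t = ⟨s, hs⟩ then Multiplicative.ofAdd 1 else 1)
          = ∏ t : S, (t : T) ^
            (Multiplicative.toAdd (if t = (⟨s, hs⟩ : S) then Multiplicative.ofAdd (1 : ZMod p)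
              else 1)).val := rfl
      rw [h2, Fintype.prod_eq_single (⟨s, hs⟩ : S)]
      · simp [ZMod.val_one]
      · intro t ht
        simp [ht]
    intro t
    exact hrange (Subgroup.mem_top t)
  exact Finite.of_surjective φ hsur

/-- The phiStep of a finitely generated finite-index subgroup has finite index. -/
lemma finiteIndex_phiStep (hp : p.Prime) (H : Subgroup G) [H.FiniteIndex] [hFG : Group.FG ↥H] :
    (phiStep p H).FiniteIndex := by
  classical
  haveI : (phiStep p (⊤ : Subgroup ↥H)).Normal := phiStep_top_normal
  obtain ⟨S, hSgen⟩ := hFG.1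
  -- the quotient of ↥H by its phiStep is finite
  have hfin : Finite (↥H ⧸ phiStep p (⊤ : Subgroup ↥H)) := by
    refine finite_of_comm_exponent (p := p) hp.one_lt ?_ ?_
      (Finset.image (QuotientGroup.mk' (phiStep p (⊤ : Subgroup ↥H))) S) ?_
    · intro a b
      refine QuotientGroup.induction_on a fun x => QuotientGroup.induction_on b fun y => ?_
      have h2 : ((x * y : ↥H) : ↥H ⧸ phiStep p ⊤) = ((y * x : ↥H) : ↥H ⧸ phiStep p ⊤) := by
        rw [QuotientGroup.eq]
        have h1 : (x * y)⁻¹ * (y * x) = ⁅y⁻¹, x⁻¹⁆ := by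
          rw [commutatorElement_def]
          group
        rw [h1]
        exact commutator_mem_phiStep (Subgroup.mem_top _) (Subgroup.mem_top _)
      simpa using h2
    · intro a
      refine QuotientGroup.induction_on a fun x => ?_
      have h2 : ((x ^ p : ↥H) : ↥H ⧸ phiStep p ⊤) = 1 :=
        (QuotientGroup.eq_one_iff _).2 (pow_mem_phiStep (Subgroup.mem_top _))
      simpa using h2
    · rw [Finset.coe_image, ← MonoidHom.map_closure, hSgen]
      exact Subgroup.map_top_of_surjective _ (QuotientGroup.mk'_surjective _)
  -- transfer finite index down to G
  have hidx : (phiStep p (⊤ : Subgroup ↥H)).index ≠ 0 := Subgroup.index_ne_zero_of_finite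
  have hrel : (phiStep p H).subgroupOf H = phiStep p (⊤ : Subgroup ↥H) := by
    have h1 : phiStep p H = (phiStep p (⊤ : Subgroup ↥H)).map H.subtype := by
      rw [map_phiStep, map_subtype_top']
    rw [h1]
    exact Subgroup.comap_map_eq_self_of_injective H.subtype_injective _
  have h2 := Subgroup.relIndex_mul_index (phiStep_le (p := p) (H := H))
  constructor
  rw [← h2]
  have h3 : (phiStep p H).relIndex H ≠ 0 := by
    rw [Subgroup.relIndex, hrel]
    exact hidx
  exact Nat.mul_ne_zero h3 (Subgroup.FiniteIndex.index_ne_zero)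

/-- Homomorphisms from a finitely generated group to a finite group form a finite set. -/
lemma finite_monoidHom {H : Type*} [Group H] (hfg : Group.FG G) [Finite H] :
    Finite (G →* H) := by
  obtain ⟨S, hSgen⟩ := hfg.1
  have hinj : Function.Injective (fun (f : G →* H) => (fun s : ↥(S : Set G) => f s)) := by
    intro f g hfg'
    apply MonoidHom.eq_of_eqOn_dense hSgen
    intro s hs
    exact congrFun hfg' ⟨s, hs⟩
  exact Finite.of_injective _ hinj

/-- A finitely generated group has finitely many subgroups of each index. -/
lemma finite_index_subgroups (hfg : Group.FG G) (n : ℕ) (hn : n ≠ 0) :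
    Finite {H : Subgroup G // H.index = n} := by
  classical
  haveI : Finite (G →* Equiv.Perm (Fin n)) := finite_monoidHom hfg
  -- encode each subgroup by its coset action plus a base point
  have henc : ∀ H : {H : Subgroup G // H.index = n},
      ∃ (ρ : G →* Equiv.Perm (Fin n)) (pt : Fin n),
        H.1 = (MulAction.stabilizer (Equiv.Perm (Fin n)) pt).comap ρ := by
    rintro ⟨H, hH⟩
    have hfinq : Finite (G ⧸ H) := by
      apply Nat.finite_of_card_ne_zero
      rw [← Subgroup.index_eq_card, hH]
      exact hn
    haveI := Fintype.ofFinite (G ⧸ H)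
    have hcard : Fintype.card (G ⧸ H) = n := by
      rw [← Nat.card_eq_fintype_card, ← Subgroup.index_eq_card, hH]
    let e : G ⧸ H ≃ Fin n := Fintype.equivFinOfCardEq hcard
    let ρ : G →* Equiv.Perm (Fin n) :=
    { toFun := fun g => (e.symm.trans (MulAction.toPerm g)).trans e
      map_one' := by
        ext i
        simp
      map_mul' := by
        intro a b
        ext i
        simp [mul_smul] }
    refine ⟨ρ, e ((1 : G) : G ⧸ H), ?_⟩
    ext g
    simp only [Subgroup.mem_comap, MulAction.mem_stabilizer_iff]
    have h1 : ρ g • e ((1 : G) : G ⧸ H) = e (g • ((1 : G) : G ⧸ H)) := by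
      show (e.symm.trans (MulAction.toPerm g)).trans e (e ((1 : G) : G ⧸ H)) = _
      simp
    rw [h1]
    have hsmul : g • ((1 : G) : G ⧸ H) = ((g : G) : G ⧸ H) := by
      show ((g * 1 : G) : G ⧸ H) = _
      rw [mul_one]
    rw [hsmul]
    constructor
    · intro h
      have h2 : ((g : G) : G ⧸ H) = ((1 : G) : G ⧸ H) := by
        rw [QuotientGroup.eq]
        simpa using inv_mem h
      rw [h2]
    · intro h
      have h2 : ((g : G) : G ⧸ H) = ((1 : G) : G ⧸ H) := e.injective h
      have h3 := QuotientGroup.eq.1 h2.symm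
      simpa using h3
  choose ρ pt hρ using henc
  have hinj : Function.Injective (fun H : {H : Subgroup G // H.index = n} => (ρ H, pt H)) := by
    intro H K h
    have h1 : ρ H = ρ K := congrArg Prod.fst h
    have h2 : pt H = pt K := congrArg Prod.snd h
    apply Subtype.ext
    rw [hρ H, hρ K, h1, h2]
  exact Finite.of_injective _ hinj

/-- The induced map on automorphism groups for an invariant normal subgroup. -/
def autToQuotAut {G : Type*} [Group G] (M : Subgroup G) [M.Normal]
    (hchar : ∀ e : G ≃* G, M.map (e : G →* G) = M) :
    MulAut G →* MulAut (G ⧸ M) where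
  toFun e := QuotientGroup.congr M M e (hchar e)
  map_one' := by
    apply MulEquiv.ext
    intro x
    refine QuotientGroup.induction_on x fun g => ?_
    rfl
  map_mul' e₁ e₂ := by
    apply MulEquiv.ext
    intro x
    refine QuotientGroup.induction_on x fun g => ?_
    rfl

lemma finite_mulAut {Q : Type*} [Group Q] [Finite Q] : Finite (MulAut Q) :=
  Finite.of_injective (fun (e : MulAut Q) => (e : Q → Q))
    (fun _ _ h => by
      apply MulEquiv.ext
      exact congrFun h)

end Lub


/-- A group is residually finite if every nontrivial element survives in some finite quotient. -/
def ResiduallyFinite (G : Type*) [Group G] : Prop :=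
  ∀ g : G, g ≠ 1 → ∃ (F : Type) (_ : Group F) (_ : Finite F) (φ : G →* F), φ g ≠ 1

/-- A group is residually `p` if every nontrivial element survives in some finite `p`-group
quotient. -/
def ResiduallyP (p : ℕ) (G : Type*) [Group G] : Prop :=
  ∀ g : G, g ≠ 1 →
    ∃ (F : Type) (_ : Group F) (_ : Finite F) (φ : G →* F), IsPGroup p F ∧ φ g ≠ 1

/-- A group is virtually residually `p` if some finite-index subgroup is residually `p`. -/
def VirtuallyResiduallyP (p : ℕ) (G : Type*) [Group G] : Prop :=
  ∃ K : Subgroup G, K.FiniteIndex ∧ ResiduallyP p ↥K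

/-- **Lubotzky.** If `G` is a finitely generated virtually residually `p` group,
then `Aut(G)` is virtually residually `p`. -/
theorem statement6 (p : ℕ) (hp : p.Prime) (G : Type*) [Group G] (hfg : Group.FG G)
    (h : VirtuallyResiduallyP p G) :
    VirtuallyResiduallyP p (MulAut G) := by
  classical
  haveI := hfg
  obtain ⟨K, hKfi, hKres⟩ := h
  set n := K.index with hn
  have hn0 : n ≠ 0 := hKfi.index_ne_zero
  -- the characteristic core `N`
  set 𝒮 : Set (Subgroup G) := {H : Subgroup G | H.index = n} with h𝒮
  haveI hSfin : Finite ↥𝒮 := Lub.finite_index_subgroups hfg n hn0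
  set N : Subgroup G := sInf 𝒮 with hN
  have hKmem : K ∈ 𝒮 := rfl
  have hNleK : N ≤ K := sInf_le hKmem
  have hNfi : N.FiniteIndex := by
    rw [hN, sInf_eq_iInf']
    exact Subgroup.finiteIndex_iInf fun H => ⟨by rw [H.2]; exact hn0⟩
  -- `N` is invariant under all automorphisms
  have hNle : ∀ e : G ≃* G, N.map (e : G →* G) ≤ N := by
    intro e
    apply le_sInf
    intro H hH
    have hcom : (H.comap (e : G →* G)) ∈ 𝒮 := by
      show (H.comap (e : G →* G)).index = n
      rw [H.index_comap_of_surjective e.surjective]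
      exact hH
    calc N.map (e : G →* G) ≤ (H.comap (e : G →* G)).map (e : G →* G) :=
          Subgroup.map_mono (sInf_le hcom)
      _ ≤ H := Subgroup.map_comap_le _ _
  have hNchar : ∀ e : G ≃* G, N.map (e : G →* G) = N := by
    intro e
    apply le_antisymm (hNle e)
    intro x hx
    refine ⟨e.symm x, hNle e.symm ⟨x, hx, rfl⟩, by simp⟩
  -- the phiStep series of `N`
  haveI := hNfi
  haveI hNfg : Group.FG ↥N := Subgroup.fg_of_index_ne_zero N
  set Sser : ℕ → Subgroup ↥N := fun k => (Lub.phiStep p)^[k] ⊤ with hSser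
  set P : ℕ → Subgroup G := fun k => (Sser k).map N.subtype with hP
  have hP0 : P 0 = N := Lub.map_subtype_top' N
  have hPsucc : ∀ k, P (k + 1) = Lub.phiStep p (P k) := by
    intro k
    show ((Lub.phiStep p)^[k + 1] ⊤).map N.subtype = _
    rw [Function.iterate_succ_apply', Lub.map_phiStep]
  have hPle : ∀ k, P k ≤ N := fun k => Subgroup.map_subtype_le _
  have hPchar : ∀ k (e : G ≃* G), (P k).map (e : G →* G) = P k := by
    intro k
    induction k with
    | zero =>
      intro e
      rw [show P 0 = N from hP0]
      exact hNchar e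
    | succ kk ih =>
      intro e
      rw [hPsucc kk, Lub.map_phiStep, ih e]
  have hPnormal : ∀ k, (P k).Normal := by
    intro k
    constructor
    intro x hx g
    have h1 := hPchar k (MulAut.conj g)
    rw [← h1]
    exact ⟨x, hx, rfl⟩
  have hPfi : ∀ k, (P k).FiniteIndex := by
    intro k
    induction k with
    | zero => rw [hP0]; exact hNfi
    | succ kk ih =>
      haveI := ih
      haveI : Group.FG ↥(P kk) := Subgroup.fg_of_index_ne_zero (P kk)
      rw [hPsucc kk]
      exact Lub.finiteIndex_phiStep hp (P kk)
  -- `N` is residually `p`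
  have hNres : ResiduallyP p ↥N := by
    intro y hy
    have hyne : Subgroup.inclusion hNleK y ≠ 1 := by
      intro h0
      apply hy
      have h1 : Subgroup.inclusion hNleK y = Subgroup.inclusion hNleK 1 := by
        rw [h0, map_one]
      exact Subgroup.inclusion_injective hNleK h1
    obtain ⟨F, hFgrp, hFfin, φ, hFp, hφ⟩ := hKres (Subgroup.inclusion hNleK y) hyne
    exact ⟨F, hFgrp, hFfin, φ.comp (Subgroup.inclusion hNleK), hFp, hφ⟩
  -- the series intersects trivially
  have htriv : ∀ y : ↥N, y ≠ 1 → ∃ k, y ∉ Sser k := by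
    intro y hy
    obtain ⟨F, hFgrp, hFfin, φ, hFp, hφ⟩ := hNres y hy
    obtain ⟨k, hk⟩ := Lub.exists_phi_chain_bot hp hFp
    refine ⟨k, fun hyk => ?_⟩
    have hmap : ∀ j, (Sser j).map φ ≤ (Lub.phiStep p)^[j] ⊤ := by
      intro j
      induction j with
      | zero => exact le_top
      | succ jj ih =>
        show (((Lub.phiStep p)^[jj + 1]) ⊤).map φ ≤ _
        rw [Function.iterate_succ_apply', Function.iterate_succ_apply', Lub.map_phiStep]
        exact Lub.phiStep_mono ih
    have h2 : φ y ∈ (Lub.phiStep p)^[k] ⊤ := hmap k ⟨y, hyk, rfl⟩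
    rw [hk, Subgroup.mem_bot] at h2
    exact hφ h2
  -- the congruence kernel
  haveI := hPnormal 1
  set π1 := Lub.autToQuotAut (P 1) (hPchar 1) with hπ1
  set A : Subgroup (MulAut G) := π1.ker with hA
  haveI := hPfi 1
  haveI : Finite (G ⧸ P 1) := Subgroup.finite_quotient_of_finiteIndex
  haveI : Finite (MulAut (G ⧸ P 1)) := Lub.finite_mulAut
  have hAfi : A.FiniteIndex := by
    constructor
    rw [hA, Subgroup.index_ker]
    exact Nat.card_pos.ne'
  have hAprop : ∀ α : MulAut G, α ∈ A → ∀ g : G, g⁻¹ * (α g) ∈ P 1 := by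
    intro α hα g
    have h1 : π1 α = 1 := hα
    have h2 : ((α g : G) : G ⧸ P 1) = ((g : G) : G ⧸ P 1) := by
      have h3 := congrArg (fun (t : MulAut (G ⧸ P 1)) => t ((g : G) : G ⧸ P 1)) h1
      have h4 : π1 α ((g : G) : G ⧸ P 1) = ((α g : G) : G ⧸ P 1) := rfl
      rw [← h4]
      simpa using h3
    exact QuotientGroup.eq.1 h2.symm
  refine ⟨A, hAfi, ?_⟩
  rintro ⟨a, ha⟩ hane
  have ha1 : a ≠ 1 := fun h0 => hane (Subtype.ext h0)
  have hex : ∃ x : G, a x ≠ x := by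
    by_contra hno
    push_neg at hno
    exact ha1 (MulEquiv.ext hno)
  obtain ⟨x, hx⟩ := hex
  set g := x⁻¹ * a x with hg
  have hg1 : g ≠ 1 := by
    intro h0
    apply hx
    have := congrArg (fun t => x * t) h0
    simpa [hg, mul_inv_cancel_left] using this
  have hgP1 : g ∈ P 1 := hAprop a ha x
  have hgN : g ∈ N := hPle 1 hgP1
  have hy1 : (⟨g, hgN⟩ : ↥N) ≠ 1 := by
    intro h0
    exact hg1 (by simpa using congrArg N.subtype h0)
  obtain ⟨k, hk⟩ := htriv ⟨g, hgN⟩ hy1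
  have hgPk : g ∉ P k := by
    intro hmem
    obtain ⟨z, hz, hz2⟩ := hmem
    exact hk (by rwa [show z = (⟨g, hgN⟩ : ↥N) from Subtype.ext hz2] at hz)
  haveI := hPnormal k
  haveI := hPfi k
  haveI : Finite (G ⧸ P k) := Subgroup.finite_quotient_of_finiteIndex
  haveI : Finite (MulAut (G ⧸ P k)) := Lub.finite_mulAut
  set πk := Lub.autToQuotAut (P k) (hPchar k) with hπk
  set ψ : ↥A →* MulAut (G ⧸ P k) := πk.comp A.subtype with hψ
  haveI : Finite ↥ψ.range := Subtype.finite
  -- the chain in the quotient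
  set mkk : G →* G ⧸ P k := QuotientGroup.mk' (P k) with hmkk
  set M : ℕ → Subgroup (G ⧸ P k) := fun i => (P i).map mkk with hM
  have hM0p : IsPGroup p ↥(M 0) := by
    apply Lub.isPGroup_of_chain (p := p) (k := k) (C := M)
    · rintro i _ ⟨g', hg', rfl⟩
      refine ⟨g' ^ p, ?_, by simp⟩
      rw [hPsucc i]
      exact Lub.pow_mem_phiStep hg'
    · rw [eq_bot_iff]
      rintro _ ⟨g', hg', rfl⟩
      have : mkk g' = 1 := (QuotientGroup.eq_one_iff g').2 hg'
      simp [this]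
  have hM1le : M 1 ≤ Lub.phiStep p (M 0) := by
    have heq : M 1 = Lub.phiStep p (M 0) := by
      show (P 1).map mkk = _
      rw [show P 1 = Lub.phiStep p (P 0) from hPsucc 0, Lub.map_phiStep]
    exact heq.le
  have hkey : ∀ δ : MulAut (G ⧸ P k), δ ∈ ψ.range → ∀ z : G ⧸ P k, z⁻¹ * δ z ∈ M 1 := by
    rintro δ ⟨⟨α, hα⟩, rfl⟩ z
    refine QuotientGroup.induction_on z fun g' => ?_
    have h1 : g'⁻¹ * α g' ∈ P 1 := hAprop α hα g'
    have h2 : ψ ⟨α, hα⟩ ((g' : G ⧸ P k)) = ((α g' : G) : G ⧸ P k) := rfl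
    rw [h2]
    exact ⟨g'⁻¹ * α g', h1, by simp only [map_mul, map_inv]; rfl⟩
  -- the range of ψ is a p-group
  have hrange : IsPGroup p ↥ψ.range := by
    intro γ
    have hord0 : orderOf γ ≠ 0 := (orderOf_pos γ).ne'
    set n0 := orderOf γ with hn0
    by_cases hcase : n0 = p ^ n0.factorization p
    · refine ⟨n0.factorization p, ?_⟩
      rw [← hcase, hn0]
      exact pow_orderOf_eq_one γ
    · exfalso
      have hm1 : (n0 / p ^ n0.factorization p) ≠ 1 := by
        intro h1
        apply hcase
        have h2 := Nat.ordProj_mul_ordCompl_eq_self n0 p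
        rw [h1, mul_one] at h2
        omega
      set q := (n0 / p ^ n0.factorization p).minFac with hqdef
      have hq : q.Prime := Nat.minFac_prime hm1
      have hqdvd : q ∣ n0 := (Nat.minFac_dvd _).trans (Nat.ordCompl_dvd n0 p)
      have hqp : q ≠ p := by
        intro h1
        have h2 : q ∣ n0 / p ^ n0.factorization p := Nat.minFac_dvd _
        rw [h1] at h2
        exact Nat.not_dvd_ordCompl hp hord0 h2
      have hndq : n0 / q ≠ 0 :=
        (Nat.div_pos (Nat.le_of_dvd (Nat.pos_of_ne_zero hord0) hqdvd) hq.pos).ne'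
      set δ := γ ^ (n0 / q) with hδdef
      have hδord : orderOf δ = q := by
        rw [hδdef, orderOf_pow_of_dvd hndq (by rw [← hn0]; exact Nat.div_dvd_of_dvd hqdvd),
          ← hn0, Nat.div_div_self hqdvd hord0]
      have hδq : δ.1 ^ q = 1 := by
        have h1 : δ ^ q = 1 := by rw [← hδord]; exact pow_orderOf_eq_one δ
        have h2 := congrArg (Subgroup.subtype ψ.range) h1
        simpa using h2
      have hβ := hkey δ.1 δ.2
      have hδtriv : δ.1 = 1 := Lub.aut_trivial hp hq hqp hM0p hM1le hβ hδq
      have hδ1 : δ = 1 := Subtype.ext hδtriv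
      rw [hδ1, orderOf_one] at hδord
      exact hq.ne_one hδord.symm
  -- shrink the range to `Type 0` and conclude
  haveI : Small.{0} ↥ψ.range := inferInstance
  set eqv : Shrink.{0} ↥ψ.range ≃* ↥ψ.range := Shrink.mulEquiv with heqv
  refine ⟨Shrink.{0} ↥ψ.range, inferInstance, inferInstance,
    eqv.symm.toMonoidHom.comp ψ.rangeRestrict, ?_, ?_⟩
  · intro t
    obtain ⟨kk, hkk⟩ := hrange (eqv t)
    refine ⟨kk, eqv.injective ?_⟩
    rw [map_pow, hkk, map_one]
  · intro h0
    have h1 : ψ.rangeRestrict ⟨a, ha⟩ = 1 := by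
      have h2 := congrArg eqv h0
      simpa using h2
    have h2 : ψ ⟨a, ha⟩ = 1 := by
      have h3 := congrArg (Subgroup.subtype ψ.range) h1
      simpa using h3
    apply hgPk
    have h3 := congrArg (fun (t : MulAut (G ⧸ P k)) => t ((x : G) : G ⧸ P k)) h2
    have h4 : ((a x : G) : G ⧸ P k) = ((x : G) : G ⧸ P k) := h3
    exact QuotientGroup.eq.1 h4.symm
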